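/- arXiv:math/0303128 — 2 statements merged into one kernel-verified Lean document; each statement's English description precedes it below -/
import Mathlib

section
/- Let h solve the Loewner-type ODE ∂_t h_t(z) = 2h_t'(w_t)²/(h_t(z) − h_t(w_t)) − 2h_t'(z)/(z − w_t), with w_t a C¹ real driving function. Then the limit as z → w_t of the right-hand side equals −3h_t''(w_t), i.e., [∂_t h_t](w_t) = −3h_t''(w_t). -/
open Filter Set

theorem loewner_boundary_limit (h : ℝ → ℝ) (w : ℝ)
    (hh : AnalyticAt ℝ h w) (hne : deriv h w ≠ 0) :
    Filter.Tendsto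
      (fun z => 2 * (deriv h w) ^ 2 / (h z - h w) - 2 * deriv h z / (z - w))
      (nhdsWithin w {w}ᶜ) (nhds (-3 * deriv (deriv h) w)) := by
  obtain ⟨p, hp⟩ := id hh
  set g : ℝ → ℝ := dslope h w with hgdef
  have hg : AnalyticAt ℝ g w := hp.has_fpower_series_dslope_fslope.analyticAt
  have hgw : g w = deriv h w := dslope_same h w
  have hfac : ∀ z, h z - h w = (z - w) * g z := fun z => (sub_smul_dslope h w z).symm
  -- deriv h is analytic at w
  have hd : AnalyticAt ℝ (deriv h) w := by
    obtain ⟨s, hs, hsa⟩ := hh.exists_mem_nhds_analyticOnNhd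
    exact (hsa.deriv) w (mem_of_mem_nhds hs)
  -- g' is differentiable near w; identity deriv h z = g z + (z - w) * deriv g z near w
  have hg' : AnalyticAt ℝ (deriv g) w := by
    obtain ⟨s, hs, hsa⟩ := hg.exists_mem_nhds_analyticOnNhd
    exact (hsa.deriv) w (mem_of_mem_nhds hs)
  have heq : (fun z => deriv h z) =ᶠ[nhds w] (fun z => g z + (z - w) * deriv g z) := by
    obtain ⟨s, hs, hsa⟩ := hg.exists_mem_nhds_analyticOnNhd
    filter_upwards [hs] with z hz
    have hdg : HasDerivAt g (deriv g z) z := ((hsa z hz).differentiableAt).hasDerivAt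
    have : HasDerivAt (fun z' => h w + (z' - w) * g z') (g z + (z - w) * deriv g z) z := by
      have := (((hasDerivAt_id z).sub_const w).mul hdg).const_add (h w)
      simpa [mul_comm] using this
    have hhe : (fun z' => h w + (z' - w) * g z') = h := by
      funext z'; rw [← hfac z']; ring
    rw [hhe] at this
    exact this.deriv
  -- second derivative relation: deriv (deriv h) w = 2 * deriv g w
  have hdd : deriv (deriv h) w = 2 * deriv g w := by
    rw [heq.deriv_eq]
    have h1 : HasDerivAt g (deriv g w) w := hg.differentiableAt.hasDerivAt
    have h2 : HasDerivAt (fun z => (z - w) * deriv g z) ((w - w) * deriv (deriv g) w + 1 * deriv g w) w := by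
      simpa using ((hasDerivAt_id w).sub_const w).fun_mul (hg'.differentiableAt.hasDerivAt)
    have := (h1.fun_add h2).deriv
    rw [this]; ring
  -- the function F
  set c := deriv h w with hc
  have hgne : g w ≠ 0 := by rw [hgw]; exact hne
  set F : ℝ → ℝ := fun z => 2 * c ^ 2 / g z - 2 * deriv h z with hF
  have hFw : F w = 0 := by
    simp only [hF, hgw, ← hc]
    field_simp
    ring
  have hFd : HasDerivAt F (-3 * deriv (deriv h) w) w := by
    have h1 : HasDerivAt (fun z => 2 * c ^ 2 / g z) (-(2 * c ^ 2) * deriv g w / g w ^ 2) w := by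
      have := (hasDerivAt_const w (2 * c ^ 2)).fun_div hg.differentiableAt.hasDerivAt hgne
      refine this.congr_deriv ?_
      ring
    have h2 : HasDerivAt (fun z => 2 * deriv h z) (2 * deriv (deriv h) w) w :=
      (hd.differentiableAt.hasDerivAt).const_mul 2
    have := h1.fun_sub h2
    refine this.congr_deriv ?_
    rw [hdd, hgw]
    field_simp
    ring
  have hslope : Tendsto (slope F w) (nhdsWithin w {w}ᶜ) (nhds (-3 * deriv (deriv h) w)) :=
    hasDerivAt_iff_tendsto_slope.mp hFd
  -- eventual equality on punctured nbhd
  have hgnz : ∀ᶠ z in nhdsWithin w {w}ᶜ, g z ≠ 0 := by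
    have : ∀ᶠ z in nhds w, g z ≠ 0 :=
      hg.continuousAt.eventually_ne hgne
    exact this.filter_mono nhdsWithin_le_nhds
  refine hslope.congr' ?_
  filter_upwards [hgnz, self_mem_nhdsWithin] with z hz hzw
  have hzw' : z - w ≠ 0 := sub_ne_zero.mpr hzw
  rw [slope_def_field, hFw, sub_zero, hfac z, sub_div, div_div, mul_comm (g z) (z - w)]
end

section
/- Let h be real-analytic near a real point w with h'(w) ≠ 0. Then lim_{z→w} [−2h'(w)²h'(z)/(h(z)−h(w))² + 2h'(z)/(z−w)² − 2h''(z)/(z−w)] = h''(w)²/(2h'(w)) − (4/3)h'''(w). -/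
open Filter Nat

theorem loewner_boundary_deriv_limit (h : ℝ → ℝ) (w : ℝ)
    (hh : AnalyticAt ℝ h w) (hne : deriv h w ≠ 0) :
    Filter.Tendsto
      (fun z => -2 * (deriv h w) ^ 2 * deriv h z / (h z - h w) ^ 2
        + 2 * deriv h z / (z - w) ^ 2 - 2 * deriv (deriv h) z / (z - w))
      (nhdsWithin w {w}ᶜ)
      (nhds ((deriv (deriv h) w) ^ 2 / (2 * deriv h w)
        - 4 / 3 * deriv (deriv (deriv h)) w)) := by
  obtain ⟨p, hp⟩ := hh
  obtain ⟨r, hpr⟩ := hp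
  have hp : HasFPowerSeriesAt h p w := ⟨r, hpr⟩
  have hh : AnalyticAt ℝ h w := hp.analyticAt
  -- coefficients
  have key : ∀ n : ℕ, iteratedDeriv n h w = (n ! : ℝ) * p.coeff n := by
    intro n
    have hfs := hpr.factorial_smul (1 : ℝ) n
    rw [iteratedDeriv, ← hfs]
    simp only [nsmul_eq_mul]
    rfl
  have hd1 : deriv h w = p.coeff 1 := hp.deriv
  have hd2 : deriv (deriv h) w = 2 * p.coeff 2 := by
    have := key 2
    simp only [iteratedDeriv_succ, iteratedDeriv_zero] at this
    norm_num [Nat.factorial] at this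
    exact this
  have hd3 : deriv (deriv (deriv h)) w = 6 * p.coeff 3 := by
    have := key 3
    simp only [iteratedDeriv_succ, iteratedDeriv_zero] at this
    norm_num [Nat.factorial] at this
    exact this
  have ha0 : p.coeff 1 ≠ 0 := hd1 ▸ hne
  -- analyticity of derivatives
  have hOn : AnalyticOnNhd ℝ h {x | AnalyticAt ℝ h x} := fun _ hx => hx
  have aH1 : AnalyticAt ℝ (deriv h) w := hOn.deriv w hh
  have aH2 : AnalyticAt ℝ (deriv (deriv h)) w := (hOn.deriv).deriv w hh
  -- the slope functions
  set g : ℝ → ℝ := dslope h w with hgdef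
  have hg : HasFPowerSeriesAt g p.fslope w := hp.has_fpower_series_dslope_fslope
  set k : ℝ → ℝ := dslope g w with hkdef
  have hk : HasFPowerSeriesAt k p.fslope.fslope w := hg.has_fpower_series_dslope_fslope
  have ag : AnalyticAt ℝ g w := hg.analyticAt
  have ak : AnalyticAt ℝ k w := hk.analyticAt
  have hgw : g w = p.coeff 1 := by rw [hgdef, dslope_same]; exact hd1
  have hgd : deriv g w = p.coeff 2 := by
    have : deriv g w = p.fslope.coeff 1 := hg.deriv
    rwa [FormalMultilinearSeries.coeff_fslope] at this
  have hkw : k w = p.coeff 2 := by rw [hkdef, dslope_same]; exact hgd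
  have hkd : deriv k w = p.coeff 3 := by
    have : deriv k w = p.fslope.fslope.coeff 1 := hk.deriv
    rwa [FormalMultilinearSeries.coeff_fslope, FormalMultilinearSeries.coeff_fslope] at this
  have hgw0 : g w ≠ 0 := by rw [hgw]; exact ha0
  -- the auxiliary function P
  set P : ℝ → ℝ := fun z =>
    2 * deriv h z * k z * (g z + deriv h w) / g z ^ 2 - 2 * deriv (deriv h) z with hPdef
  have aP : AnalyticAt ℝ P w :=
    ((((analyticAt_const.mul aH1).mul ak).mul (ag.add analyticAt_const)).div
      (ag.pow 2) (pow_ne_zero 2 hgw0)).sub (analyticAt_const.mul aH2)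
  have hPw : P w = 0 := by
    rw [hPdef]
    simp only
    rw [hgw, hkw, hd1, hd2]
    field_simp
    ring
  -- Q = dslope P w
  obtain ⟨q, hq⟩ := aP
  set Q : ℝ → ℝ := dslope P w with hQdef
  have hQ : HasFPowerSeriesAt Q q.fslope w := hq.has_fpower_series_dslope_fslope
  have aQ : AnalyticAt ℝ Q w := hQ.analyticAt
  -- derivative of P at w
  have H1d : HasDerivAt (deriv h) (2 * p.coeff 2) w := by
    have := aH1.differentiableAt.hasDerivAt
    rwa [hd2] at this
  have H2d : HasDerivAt (deriv (deriv h)) (6 * p.coeff 3) w := by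
    have := aH2.differentiableAt.hasDerivAt
    rwa [hd3] at this
  have gd : HasDerivAt g (p.coeff 2) w := by
    have := ag.differentiableAt.hasDerivAt
    rwa [hgd] at this
  have kd : HasDerivAt k (p.coeff 3) w := by
    have := ak.differentiableAt.hasDerivAt
    rwa [hkd] at this
  have hNum : HasDerivAt (fun z => 2 * deriv h z * k z * (g z + deriv h w))
      (((2 * (2 * p.coeff 2)) * k w + 2 * deriv h w * p.coeff 3) * (g w + deriv h w)
        + 2 * deriv h w * k w * p.coeff 2) w :=
    ((H1d.const_mul 2).mul kd).mul (gd.add_const _)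
  have hDen : HasDerivAt (fun z => g z ^ 2) ((2 : ℕ) * g w ^ (2 - 1) * p.coeff 2) w :=
    gd.pow 2
  have hP' : HasDerivAt P _ w :=
    (hNum.div hDen (pow_ne_zero 2 hgw0)).sub (H2d.const_mul 2)
  have hPderiv := hP'.deriv
  -- value of Q at w
  have hQw : Q w = (deriv (deriv h) w) ^ 2 / (2 * deriv h w)
      - 4 / 3 * deriv (deriv (deriv h)) w := by
    rw [hQdef, dslope_same, hPderiv, hd1, hd2, hd3, hgw, hkw]
    field_simp
    ring
  -- tendsto of Q
  have hQt : Tendsto Q (nhdsWithin w {w}ᶜ) (nhds (Q w)) :=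
    aQ.continuousAt.continuousWithinAt
  rw [← hQw]
  -- eventual equality
  have hgne : ∀ᶠ z in nhds w, g z ≠ 0 := ag.continuousAt.eventually_ne hgw0
  have hev : ∀ᶠ z in nhdsWithin w {w}ᶜ,
      (-2 * (deriv h w) ^ 2 * deriv h z / (h z - h w) ^ 2
        + 2 * deriv h z / (z - w) ^ 2 - 2 * deriv (deriv h) z / (z - w)) = Q z := by
    filter_upwards [hgne.filter_mono nhdsWithin_le_nhds, self_mem_nhdsWithin]
      with z hgz hzw
    have hzw' : z ≠ w := hzw
    have ht : z - w ≠ 0 := sub_ne_zero.mpr hzw'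
    have e1 : h z - h w = (z - w) * g z := by
      rw [hgdef, dslope_of_ne h hzw', slope_def_field]
      field_simp
    have e2 : k z = (g z - deriv h w) / (z - w) := by
      rw [hkdef, dslope_of_ne g hzw', slope_def_field, hgw, hd1]
    have e3 : Q z = P z / (z - w) := by
      rw [hQdef, dslope_of_ne P hzw', slope_def_field, hPw, sub_zero]
    rw [e3, hPdef]
    simp only
    rw [e1, e2]
    field_simp
    ring
  exact Filter.Tendsto.congr' (hev.mono fun z hz => hz.symm) hQt
end
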